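/- Let Ω ⊆ ℝ^N be a nonempty open set of infinite Lebesgue measure, 1 ≤ p < ∞, c > 0, and let g : Ω × Ω → ℝ be measurable with g(x,y) ≥ c for almost every (x,y). Let f : Ω → ℝ^m be measurable and not almost everywhere equal to a constant. Then ∫_Ω ∫_Ω g(x,y) |f(y) − f(x)|^p dx dy = +∞. -/

import Mathlib

open MeasureTheory Set
open scoped ENNReal NNReal

/-- If `Ω ⊆ ℝ^N` is nonempty open of infinite measure, `1 ≤ p < ∞`, `g` is
measurable with `g ≥ c > 0` a.e. on `Ω × Ω`, and `f` is measurable and not a.e. constant,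
then `∫_Ω ∫_Ω g(x,y) |f(y) − f(x)|^p dx dy = +∞`. -/
theorem statement3 (N m : ℕ) (Ω : Set (EuclideanSpace ℝ (Fin N)))
    (hΩ_open : IsOpen Ω) (hΩ_ne : Ω.Nonempty) (hΩ_inf : volume Ω = ⊤)
    (p : ℝ) (hp1 : 1 ≤ p) (c : ℝ) (hc : 0 < c)
    (g : EuclideanSpace ℝ (Fin N) × EuclideanSpace ℝ (Fin N) → ℝ)
    (hg_meas : Measurable g)
    (hg_lb : ∀ᵐ z ∂((volume.restrict Ω).prod (volume.restrict Ω)), c ≤ g z)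
    (f : EuclideanSpace ℝ (Fin N) → EuclideanSpace ℝ (Fin m)) (hf : Measurable f)
    (hf_nc : ¬ ∃ v : EuclideanSpace ℝ (Fin m), f =ᵐ[volume.restrict Ω] fun _ => v) :
    ∫⁻ z,
        ENNReal.ofReal (g z) * (‖f z.2 - f z.1‖₊ : ℝ≥0∞) ^ p ∂((volume.restrict Ω).prod (volume.restrict Ω)) = ⊤ := by
  set μ : Measure (EuclideanSpace ℝ (Fin N)) := volume.restrict Ω with hμ
  have hp0 : (0:ℝ) < p := lt_of_lt_of_le one_pos hp1
  have hμuniv : μ Set.univ = ⊤ := by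
    simp [hμ, Measure.restrict_apply, hΩ_inf]
  set h : EuclideanSpace ℝ (Fin N) × EuclideanSpace ℝ (Fin N) → ℝ≥0∞ :=
    fun z => (‖f z.2 - f z.1‖₊ : ℝ≥0∞) ^ p with hh
  have hh_meas : Measurable h := by
    apply Measurable.pow_const
    exact measurable_coe_nnreal_ennreal.comp
      (((hf.comp measurable_snd).sub (hf.comp measurable_fst)).nnnorm)
  have hmono : ∫⁻ z, ENNReal.ofReal c * h z ∂(μ.prod μ) ≤
      ∫⁻ z, ENNReal.ofReal (g z) * h z ∂(μ.prod μ) := by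
    refine lintegral_mono_ae ?_
    filter_upwards [hg_lb] with z hz
    exact mul_le_mul_left (ENNReal.ofReal_le_ofReal hz) _
  rw [← top_le_iff]
  refine le_trans ?_ hmono
  rw [lintegral_const_mul _ hh_meas]
  suffices hI : ∫⁻ z, h z ∂(μ.prod μ) = ⊤ by
    rw [hI, ENNReal.mul_top (by simp [ENNReal.ofReal_eq_zero, not_le, hc])]
  by_contra hfin
  have hfin' : ∫⁻ x, ∫⁻ y, h (x, y) ∂μ ∂μ ≠ ⊤ := by
    rwa [← lintegral_prod _ hh_meas.aemeasurable]
  set F : EuclideanSpace ℝ (Fin N) → ℝ≥0∞ := fun x => ∫⁻ y, h (x, y) ∂μ with hF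
  have hF_meas : Measurable F := hh_meas.lintegral_prod_right'
  have hae : ∀ᵐ x ∂μ, F x < ⊤ := ae_lt_top hF_meas hfin'
  set S : Set (EuclideanSpace ℝ (Fin N)) := {x | F x < ⊤} with hS
  have hScompl : μ Sᶜ = 0 := by
    have := ae_iff.mp hae
    simpa [hS, Set.compl_setOf] using this
  have hSne : S.Nonempty := by
    by_contra hSe
    rw [Set.not_nonempty_iff_eq_empty] at hSe
    have h2 : μ Set.univ = 0 := by
      have h3 : Sᶜ = Set.univ := by rw [hSe, Set.compl_empty]
      rw [← h3, hScompl]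
    rw [hμuniv] at h2
    simp at h2
  obtain ⟨x₀, hx₀⟩ := hSne
  have key : ∀ x ∈ S, f x = f x₀ := by
    intro x hx
    set d : ℝ≥0∞ := (‖f x - f x₀‖₊ : ℝ≥0∞) with hd
    have hbound : ∀ y, d ^ p ≤ (2:ℝ≥0∞) ^ p * (h (x, y) + h (x₀, y)) := by
      intro y
      have htri : d ≤ (‖f y - f x₀‖₊ : ℝ≥0∞) + (‖f y - f x‖₊ : ℝ≥0∞) := by
        have he : f x - f x₀ = (f y - f x₀) - (f y - f x) := by abel
        rw [hd, he]
        exact_mod_cast nnnorm_sub_le _ _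
      have h2 : d ≤ 2 * max (‖f y - f x‖₊ : ℝ≥0∞) (‖f y - f x₀‖₊ : ℝ≥0∞) := by
        refine le_trans htri ?_
        rw [two_mul]
        exact add_le_add (le_max_right _ _) (le_max_left _ _)
      calc d ^ p ≤ (2 * max (‖f y - f x‖₊ : ℝ≥0∞) (‖f y - f x₀‖₊ : ℝ≥0∞)) ^ p :=
            ENNReal.rpow_le_rpow h2 hp0.le
        _ = (2:ℝ≥0∞) ^ p * (max (‖f y - f x‖₊ : ℝ≥0∞) (‖f y - f x₀‖₊ : ℝ≥0∞)) ^ p :=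
            ENNReal.mul_rpow_of_nonneg _ _ hp0.le
        _ ≤ (2:ℝ≥0∞) ^ p * (h (x, y) + h (x₀, y)) := by
            refine mul_le_mul_right ?_ _
            rcases max_cases ((‖f y - f x‖₊ : ℝ≥0∞)) ((‖f y - f x₀‖₊ : ℝ≥0∞)) with ⟨he, _⟩ | ⟨he, _⟩ <;>
                rw [he]
            · exact le_self_add
            · exact le_add_self
    have hmx : Measurable fun y => h (x, y) := hh_meas.comp measurable_prodMk_left
    have hmx0 : Measurable fun y => h (x₀, y) := hh_meas.comp measurable_prodMk_left
    have hle : d ^ p * μ Set.univ ≤ (2:ℝ≥0∞) ^ p * (F x + F x₀) := by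
      have h4 := lintegral_mono (fun y => hbound y) (μ := μ)
      rw [lintegral_const] at h4
      refine le_trans h4 ?_
      rw [lintegral_const_mul (f := fun a => h (x, a) + h (x₀, a)) _ (hmx.add hmx0), lintegral_add_left hmx]
    have hrhs : (2:ℝ≥0∞) ^ p * (F x + F x₀) < ⊤ := by
      apply ENNReal.mul_lt_top
      · exact ENNReal.rpow_lt_top_of_nonneg hp0.le (by norm_num)
      · exact ENNReal.add_lt_top.2 ⟨hx, hx₀⟩
    have hd0 : d ^ p = 0 := by
      by_contra hdne
      have h5 : d ^ p * μ Set.univ = ⊤ := by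
        rw [hμuniv, ENNReal.mul_top hdne]
      rw [h5] at hle
      exact absurd (top_le_iff.mp hle) (ne_of_lt hrhs)
    have hdz : d = 0 := by
      rcases (ENNReal.rpow_eq_zero_iff).1 hd0 with ⟨h1, _⟩ | ⟨_, h2⟩
      · exact h1
      · exact absurd h2 (not_lt.2 hp0.le)
    rw [hd] at hdz
    have hnn : ‖f x - f x₀‖₊ = 0 := by exact_mod_cast hdz
    rw [nnnorm_eq_zero, sub_eq_zero] at hnn
    exact hnn
  exact hfin (by
    exact absurd (⟨f x₀, by filter_upwards [hae] with x hx using key x hx⟩ :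
      ∃ v, f =ᵐ[μ] fun _ => v) hf_nc)
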